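/- With P_k(x) defined as the degree-7 spline polynomial P_k(x) = f(k) + t(Δ-½Δ²+⅓Δ³)f(k) + ½t²(Δ²-Δ³)f(k) + (1/6)t³Δ³f(k) - (23/3)t⁴Δ⁴f(k) + (41/2)t⁵Δ⁴f(k) - (55/3)t⁶Δ⁴f(k) + (11/2)t⁷Δ⁴f(k), where t = x - k (step δ = 1), the adjacent polynomials match to third order at the knot: P_{k-1}^{(a)}(k) = P_k^{(a)}(k) for a = 0, 1, 2, 3 and any f : ℤ → ℝ. -/

import Mathlib

/-- Unit forward difference on functions `ℤ → ℝ`. -/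
def fwd (f : ℤ → ℝ) (k : ℤ) : ℝ := f (k + 1) - f k

/-- The degree-7 spline polynomial `P_k` (step 1), with `t = x - k`. -/
noncomputable def Pk (f : ℤ → ℝ) (k : ℤ) (x : ℝ) : ℝ :=
  f k
    + (x - k) * (fwd f k - (1/2) * fwd (fwd f) k + (1/3) * fwd (fwd (fwd f)) k)
    + (1/2) * (x - k)^2 * (fwd (fwd f) k - fwd (fwd (fwd f)) k)
    + (1/6) * (x - k)^3 * fwd (fwd (fwd f)) k
    + (-(23/3) * (x - k)^4 + (41/2) * (x - k)^5 - (55/3) * (x - k)^6 + (11/2) * (x - k)^7)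
        * fwd (fwd (fwd (fwd f))) k

/-- adjacent spline polynomials match to third order at the knot:
`P_{k-1}^{(a)}(k) = P_k^{(a)}(k)` for `a = 0,1,2,3` and any `f : ℤ → ℝ`. -/
def P8 (y c0 c1 c2 c3 c4 c5 c6 c7 : ℝ) (x : ℝ) : ℝ :=
  c0 + c1*(x-y) + c2*(x-y)^2 + c3*(x-y)^3 + c4*(x-y)^4 + c5*(x-y)^5 + c6*(x-y)^6 + c7*(x-y)^7

lemma hd (y c0 c1 c2 c3 c4 c5 c6 c7 x : ℝ) :
    HasDerivAt (P8 y c0 c1 c2 c3 c4 c5 c6 c7)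
      (P8 y c1 (2*c2) (3*c3) (4*c4) (5*c5) (6*c6) (7*c7) 0 x) x := by
  have h : HasDerivAt (fun x : ℝ => x - y) 1 x := (hasDerivAt_id x).sub_const y
  have H := (((((((hasDerivAt_const x c0).add (h.const_mul c1)).add
    ((h.pow 2).const_mul c2)).add ((h.pow 3).const_mul c3)).add
    ((h.pow 4).const_mul c4)).add ((h.pow 5).const_mul c5)).add
    ((h.pow 6).const_mul c6)).add ((h.pow 7).const_mul c7)
  convert H using 1
  case e'_4 => rfl
  case e'_5 => rfl
  case e'_8 => rfl
  simp [P8]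
  ring

lemma deriv_P8 (y c0 c1 c2 c3 c4 c5 c6 c7 : ℝ) :
    deriv (P8 y c0 c1 c2 c3 c4 c5 c6 c7)
      = P8 y c1 (2*c2) (3*c3) (4*c4) (5*c5) (6*c6) (7*c7) 0 := by
  funext x; exact (hd y c0 c1 c2 c3 c4 c5 c6 c7 x).deriv

theorem stmt9 (f : ℤ → ℝ) (k : ℤ) (a : ℕ) (ha : a ≤ 3) :
    iteratedDeriv a (Pk f (k - 1)) (k : ℝ) = iteratedDeriv a (Pk f k) (k : ℝ) := by
  have hP : ∀ m : ℤ, Pk f m = P8 (m : ℝ) (f m)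
      (fwd f m - (1/2) * fwd (fwd f) m + (1/3) * fwd (fwd (fwd f)) m)
      ((1/2) * (fwd (fwd f) m - fwd (fwd (fwd f)) m))
      ((1/6) * fwd (fwd (fwd f)) m)
      (-(23/3) * fwd (fwd (fwd (fwd f))) m)
      ((41/2) * fwd (fwd (fwd (fwd f))) m)
      (-(55/3) * fwd (fwd (fwd (fwd f))) m)
      ((11/2) * fwd (fwd (fwd (fwd f))) m) := by
    intro m; funext x; simp only [Pk, P8]; ring
  rw [hP, hP]
  interval_cases a <;>
    simp only [iteratedDeriv_succ', iteratedDeriv_zero, deriv_P8] <;>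
  · simp only [P8, fwd]
    push_cast
    ring_nf
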